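/- Let ν be a non-Archimedean absolute value on ℝ extending the 2-adic absolute value on ℚ. Define Xᵢ = {x ∈ S² : ν(xᵢ) > ν(x_k) for all k ≠ i} for i = 1, 2, 3. Then no Xᵢ contains a pair of orthogonal points: if u, v ∈ Xᵢ then u·v ≠ 0. -/

import Mathlib

lemma nu_one (ν : ℝ → ℝ) (hmul : ∀ a b, ν (a * b) = ν a * ν b)
    (hzero : ∀ a, ν a = 0 ↔ a = 0) : ν 1 = 1 := by
  have h := hmul 1 1
  rw [one_mul] at h
  have h1 : ν 1 ≠ 0 := by simp [hzero]
  have hpos : 0 < ν 1 := lt_of_le_of_ne (by nlinarith [h, sq_nonneg (ν 1)]) (Ne.symm h1)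
  nlinarith [h]

lemma nu_neg (ν : ℝ → ℝ) (hnn : ∀ a, 0 ≤ ν a) (hmul : ∀ a b, ν (a * b) = ν a * ν b)
    (hzero : ∀ a, ν a = 0 ↔ a = 0) (a : ℝ) : ν (-a) = ν a := by
  have h1 : ν (-1) = 1 := by
    have h := hmul (-1) (-1)
    rw [neg_one_mul, neg_neg, nu_one ν hmul hzero] at h
    nlinarith [hnn (-1)]
  calc ν (-a) = ν ((-1) * a) := by ring_nf
  _ = ν a := by rw [hmul, h1, one_mul]

lemma nu_add_eq (ν : ℝ → ℝ) (hnn : ∀ a, 0 ≤ ν a) (hmul : ∀ a b, ν (a * b) = ν a * ν b)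
    (hadd : ∀ a b, ν (a + b) ≤ max (ν a) (ν b))
    (hzero : ∀ a, ν a = 0 ↔ a = 0) (a b : ℝ) (h : ν b < ν a) : ν (a + b) = ν a := by
  have h1 : ν (a + b) ≤ ν a := (hadd a b).trans (le_of_eq (max_eq_left h.le))
  have h2 : ν a ≤ ν (a + b) := by
    have e : a = (a + b) + (-b) := by ring
    have h3 := hadd (a + b) (-b)
    rw [← e, nu_neg ν hnn hmul hzero] at h3
    rcases max_cases (ν (a + b)) (ν b) with ⟨he, _⟩ | ⟨he, _⟩
    · rwa [he] at h3
    · rw [he] at h3; linarith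
  linarith

lemma key (ν : ℝ → ℝ) (hnn : ∀ a, 0 ≤ ν a) (hmul : ∀ a b, ν (a * b) = ν a * ν b)
    (hadd : ∀ a b, ν (a + b) ≤ max (ν a) (ν b))
    (hzero : ∀ a, ν a = 0 ↔ a = 0)
    (a b c a' b' c' : ℝ)
    (h1 : a*a + b*b + c*c = 1) (h1' : a'*a' + b'*b' + c'*c' = 1)
    (hb : ν b < ν a) (hc : ν c < ν a) (hb' : ν b' < ν a') (hc' : ν c' < ν a') :
    a*a' + b*b' + c*c' ≠ 0 := by
  have nuone := nu_one ν hmul hzero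
  have norm1 : ∀ x y z : ℝ, x*x + y*y + z*z = 1 → ν y < ν x → ν z < ν x → ν x = 1 := by
    intro x y z hs hy hz
    have hrest : ν (y*y + z*z) < ν (x*x) := by
      have := hadd (y*y) (z*z)
      rw [hmul x x, hmul y y, hmul z z] at *
      rcases max_cases (ν y * ν y) (ν z * ν z) with ⟨he, _⟩ | ⟨he, _⟩ <;>
        [skip; skip] <;> rw [he] at this <;> nlinarith [hnn x, hnn y, hnn z]
    have : ν (x*x + (y*y + z*z)) = ν (x*x) :=
      nu_add_eq ν hnn hmul hadd hzero _ _ hrest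
    have he : x*x + (y*y + z*z) = 1 := by linarith
    rw [he, nuone, hmul] at this
    nlinarith [hnn x]
  have ha : ν a = 1 := norm1 a b c h1 hb hc
  have ha' : ν a' = 1 := norm1 a' b' c' h1' hb' hc'
  have hsmall : ν (b*b' + c*c') < ν (a*a') := by
    have hmax := hadd (b*b') (c*c')
    have hbb : ν (b*b') < 1 := by rw [hmul]; nlinarith [hnn b, hnn b']
    have hcc : ν (c*c') < 1 := by rw [hmul]; nlinarith [hnn c, hnn c']
    have haa : ν (a*a') = 1 := by rw [hmul, ha, ha', one_mul]
    rw [haa]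
    exact lt_of_le_of_lt hmax (max_lt hbb hcc)
  have heq : ν (a*a' + (b*b' + c*c')) = ν (a*a') :=
    nu_add_eq ν hnn hmul hadd hzero _ _ hsmall
  intro hcon
  rw [show a*a' + (b*b' + c*c') = a*a' + b*b' + c*c' by ring, hcon] at heq
  rw [(hzero 0).mpr rfl, hmul, ha, ha'] at heq
  norm_num at heq

theorem stmt_15 (ν : ℝ → ℝ)
    (hnn : ∀ a, 0 ≤ ν a)
    (hmul : ∀ a b, ν (a * b) = ν a * ν b)
    (hadd : ∀ a b, ν (a + b) ≤ max (ν a) (ν b))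
    (hzero : ∀ a, ν a = 0 ↔ a = 0)
    (hext : ∀ q : ℚ, ν (q : ℝ) = (padicNorm 2 q : ℝ))
    (X : Fin 3 → Set (EuclideanSpace ℝ (Fin 3)))
    (hX : ∀ i, X i = {x | ‖x‖ = 1 ∧ ∀ k, k ≠ i → ν (x i) > ν (x k)}) :
    ∀ i, ∀ u ∈ X i, ∀ v ∈ X i, (inner ℝ u v : ℝ) ≠ 0 := by
  intro i u hu v hv
  rw [hX i] at hu hv
  obtain ⟨hun, hui⟩ := hu
  obtain ⟨hvn, hvi⟩ := hv
  have hu1 : u 0 * u 0 + u 1 * u 1 + u 2 * u 2 = 1 := by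
    have h := real_inner_self_eq_norm_mul_norm u
    rw [hun] at h
    simp only [PiLp.inner_apply, RCLike.inner_apply, conj_trivial, Fin.sum_univ_three] at h
    linarith
  have hv1 : v 0 * v 0 + v 1 * v 1 + v 2 * v 2 = 1 := by
    have h := real_inner_self_eq_norm_mul_norm v
    rw [hvn] at h
    simp only [PiLp.inner_apply, RCLike.inner_apply, conj_trivial, Fin.sum_univ_three] at h
    linarith
  have hin : (inner ℝ u v : ℝ) = u 0 * v 0 + u 1 * v 1 + u 2 * v 2 := by
    simp [PiLp.inner_apply, RCLike.inner_apply, Fin.sum_univ_three]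
    ring
  rw [hin]
  fin_cases i
  · exact key ν hnn hmul hadd hzero (u 0) (u 1) (u 2) (v 0) (v 1) (v 2) hu1 hv1
      (hui 1 (by decide)) (hui 2 (by decide)) (hvi 1 (by decide)) (hvi 2 (by decide))
  · have := key ν hnn hmul hadd hzero (u 1) (u 0) (u 2) (v 1) (v 0) (v 2)
      (by linarith) (by linarith)
      (hui 0 (by decide)) (hui 2 (by decide)) (hvi 0 (by decide)) (hvi 2 (by decide))
    intro hc; exact this (by linarith)
  · have := key ν hnn hmul hadd hzero (u 2) (u 0) (u 1) (v 2) (v 0) (v 1)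
      (by linarith) (by linarith)
      (hui 0 (by decide)) (hui 1 (by decide)) (hvi 0 (by decide)) (hvi 1 (by decide))
    intro hc; exact this (by linarith)
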